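/- arXiv:2505.22941 — 2 statements merged into one kernel-verified Lean document; each statement's English description precedes it below -/
import Mathlib

section
/- Let C be a z_0-unsolvable configuration on the Flower snark J_3, and let A = {x_0, x_1, x_{−1}} and B = {y_0, y_1, y_{−1}}. Then C(A ∪ B) ≤ 6, where C(S) denotes the total number of pebbles on the vertices of S. -/
/-- A pebbling move on the graph `G`: remove two pebbles from a vertex `u`
(which has at least two pebbles) and add one pebble to a neighbor `v` of `u`. -/
def PebblingMove {V : Type} [DecidableEq V] (G : SimpleGraph V) (C C' : V → ℕ) : Prop :=
  ∃ u v, G.Adj u v ∧ 2 ≤ C u ∧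
    C' = fun w => if w = u then C u - 2 else if w = v then C v + 1 else C w

/-- A configuration `C` is `r`-solvable if some (possibly empty) sequence of
pebbling moves starting from `C` produces a configuration with at least one
pebble on `r`. -/
def PebblingSolvable {V : Type} [DecidableEq V] (G : SimpleGraph V) (C : V → ℕ) (r : V) : Prop :=
  ∃ C' : V → ℕ, Relation.ReflTransGen (PebblingMove G) C C' ∧ 1 ≤ C' r

/-- The pebbling number of `G`: the least `t` such that for every target
vertex `r`, every configuration of size `t` is `r`-solvable. -/
noncomputable def pebblingNumber {V : Type} [DecidableEq V] [Fintype V] (G : SimpleGraph V) : ℕ :=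
  sInf {t : ℕ | ∀ (r : V) (C : V → ℕ), (∑ v, C v) = t → PebblingSolvable G C r}

/-- The 12 vertices of the Flower snark `J₃`; `vm` denotes `v_{-1}`,
`xm` denotes `x_{-1}`, etc. -/
inductive J3V : Type
  | v0 | v1 | vm | x0 | x1 | xm | y0 | y1 | ym | z0 | z1 | zm
  deriving DecidableEq

instance : Fintype J3V where
  elems := {J3V.v0, J3V.v1, J3V.vm, J3V.x0, J3V.x1, J3V.xm,
    J3V.y0, J3V.y1, J3V.ym, J3V.z0, J3V.z1, J3V.zm}
  complete := by intro x; cases x <;> decide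

open J3V in
/-- The Flower snark `J₃` (Tietze's graph), with its 18 edges. -/
def J3 : SimpleGraph J3V := SimpleGraph.fromEdgeSet
  ({s(z0, v0), s(z0, x0), s(z0, y0), s(v0, v1), s(v0, vm),
    s(x0, x1), s(x0, xm), s(y0, y1), s(y0, ym), s(v1, vm),
    s(v1, z1), s(vm, zm), s(x1, z1), s(y1, z1), s(xm, zm),
    s(ym, zm), s(xm, y1), s(x1, ym)} : Set (Sym2 J3V))


open J3V

abbrev St := ℕ × ℕ × ℕ × ℕ × ℕ × ℕ

/-- Configuration from a state: pebbles on x0,x1,xm,y0,y1,ym; zero elsewhere. -/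
def cfg (s : St) : J3V → ℕ := fun w =>
  match w with
  | x0 => s.1 | x1 => s.2.1 | xm => s.2.2.1
  | y0 => s.2.2.2.1 | y1 => s.2.2.2.2.1 | ym => s.2.2.2.2.2
  | _ => 0

def win (s : St) : Bool := 2 ≤ s.1 || 2 ≤ s.2.2.2.1

def next (s : St) : List St :=
  match s with
  | (a0,a1,am,b0,b1,bm) =>
    (if 2 ≤ a1 then [(a0+1,a1-2,am,b0,b1,bm),(a0,a1-2,am,b0,b1,bm+1)] else []) ++
    (if 2 ≤ am then [(a0+1,a1,am-2,b0,b1,bm),(a0,a1,am-2,b0,b1+1,bm)] else []) ++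
    (if 2 ≤ b1 then [(a0,a1,am,b0+1,b1-2,bm),(a0,a1,am+1,b0,b1-2,bm)] else []) ++
    (if 2 ≤ bm then [(a0,a1,am,b0+1,b1,bm-2),(a0,a1+1,am,b0,b1,bm-2)] else [])

def reach : ℕ → St → Bool
  | 0, s => win s
  | n+1, s => win s || (next s).any (reach n)

lemma adj_x0_z0 : J3.Adj x0 z0 := by simp [J3, SimpleGraph.fromEdgeSet_adj]
lemma adj_y0_z0 : J3.Adj y0 z0 := by simp [J3, SimpleGraph.fromEdgeSet_adj]
lemma adj_x1_x0 : J3.Adj x1 x0 := by simp [J3, SimpleGraph.fromEdgeSet_adj]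
lemma adj_xm_x0 : J3.Adj xm x0 := by simp [J3, SimpleGraph.fromEdgeSet_adj]
lemma adj_y1_y0 : J3.Adj y1 y0 := by simp [J3, SimpleGraph.fromEdgeSet_adj]
lemma adj_ym_y0 : J3.Adj ym y0 := by simp [J3, SimpleGraph.fromEdgeSet_adj]
lemma adj_x1_ym : J3.Adj x1 ym := by simp [J3, SimpleGraph.fromEdgeSet_adj]
lemma adj_xm_y1 : J3.Adj xm y1 := by simp [J3, SimpleGraph.fromEdgeSet_adj]
lemma adj_y1_xm : J3.Adj y1 xm := by simp [J3, SimpleGraph.fromEdgeSet_adj]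
lemma adj_ym_x1 : J3.Adj ym x1 := by simp [J3, SimpleGraph.fromEdgeSet_adj]

lemma mk_move {u v : J3V} (hadj : J3.Adj u v) {C C' : J3V → ℕ} (h2 : 2 ≤ C u)
    (he : C' = fun w => if w = u then C u - 2 else if w = v then C v + 1 else C w) :
    PebblingMove J3 C C' := ⟨u, v, hadj, h2, he⟩

lemma solv_step {C C' : J3V → ℕ} {r : J3V} (hm : PebblingMove J3 C C')
    (hs : PebblingSolvable J3 C' r) : PebblingSolvable J3 C r := by
  obtain ⟨D, hD, hr⟩ := hs
  exact ⟨D, hD.head hm, hr⟩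

lemma win_solv {s : St} (h : win s = true) : PebblingSolvable J3 (cfg s) z0 := by
  obtain ⟨a0, a1, am, b0, b1, bm⟩ := s
  simp only [win, Bool.or_eq_true, decide_eq_true_eq] at h
  rcases h with h | h
  · refine solv_step (mk_move adj_x0_z0 (C := cfg (a0,a1,am,b0,b1,bm)) h rfl) ?_
    exact ⟨_, Relation.ReflTransGen.refl, by simp [cfg]⟩
  · refine solv_step (mk_move adj_y0_z0 (C := cfg (a0,a1,am,b0,b1,bm)) h rfl) ?_
    exact ⟨_, Relation.ReflTransGen.refl, by simp [cfg]⟩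

lemma next_move {s s' : St} (h : s' ∈ next s) : PebblingMove J3 (cfg s) (cfg s') := by
  obtain ⟨a0, a1, am, b0, b1, bm⟩ := s
  simp only [next, List.mem_append] at h
  rcases h with ((h | h) | h) | h <;>
    rw [List.mem_ite_nil_right] at h <;>
    obtain ⟨hg, h⟩ := h <;>
    simp only [List.mem_cons, List.mem_singleton, List.not_mem_nil, or_false] at h
  · rcases h with rfl | rfl
    · exact mk_move adj_x1_x0 hg (by funext w; cases w <;> simp [cfg])
    · exact mk_move adj_x1_ym hg (by funext w; cases w <;> simp [cfg])
  · rcases h with rfl | rfl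
    · exact mk_move adj_xm_x0 hg (by funext w; cases w <;> simp [cfg])
    · exact mk_move adj_xm_y1 hg (by funext w; cases w <;> simp [cfg])
  · rcases h with rfl | rfl
    · exact mk_move adj_y1_y0 hg (by funext w; cases w <;> simp [cfg])
    · exact mk_move adj_y1_xm hg (by funext w; cases w <;> simp [cfg])
  · rcases h with rfl | rfl
    · exact mk_move adj_ym_y0 hg (by funext w; cases w <;> simp [cfg])
    · exact mk_move adj_ym_x1 hg (by funext w; cases w <;> simp [cfg])

lemma reach_solv : ∀ n (s : St), reach n s = true → PebblingSolvable J3 (cfg s) z0 := by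
  intro n
  induction n with
  | zero => intro s hs; exact win_solv hs
  | succ n ih =>
    intro s hs
    simp only [reach, Bool.or_eq_true, List.any_eq_true] at hs
    rcases hs with hs | ⟨s', hmem, hs'⟩
    · exact win_solv hs
    · exact solv_step (next_move hmem) (ih s' hs')

lemma seven_check : ∀ a0, a0 < 8 → ∀ a1, a1 < 8 - a0 → ∀ am, am < 8 - a0 - a1 →
    ∀ b0, b0 < 8 - a0 - a1 - am → ∀ b1, b1 < 8 - a0 - a1 - am - b0 →
    reach 3 (a0, a1, am, b0, b1, 7 - a0 - a1 - am - b0 - b1) = true := by decide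

lemma seven (a0 a1 am b0 b1 bm : ℕ) (h : a0 + a1 + am + b0 + b1 + bm = 7) :
    PebblingSolvable J3 (cfg (a0, a1, am, b0, b1, bm)) z0 := by
  have hbm : bm = 7 - a0 - a1 - am - b0 - b1 := by omega
  subst hbm
  exact reach_solv 3 _ (seven_check a0 (by omega) a1 (by omega) am (by omega)
    b0 (by omega) b1 (by omega))

lemma solv_mono {D C : J3V → ℕ} {r : J3V} (hle : ∀ v, D v ≤ C v)
    (hs : PebblingSolvable J3 D r) : PebblingSolvable J3 C r := by
  obtain ⟨D', hD', hr⟩ := hs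
  suffices h : ∀ C, (∀ v, D v ≤ C v) → ∃ C', Relation.ReflTransGen (PebblingMove J3) C C' ∧
      ∀ v, D' v ≤ C' v by
    obtain ⟨C', hC', hle'⟩ := h C hle
    exact ⟨C', hC', le_trans hr (hle' r)⟩
  clear hle hr
  induction hD' with
  | refl => exact fun C hle => ⟨C, Relation.ReflTransGen.refl, hle⟩
  | tail _ hmove ih =>
    intro C hle
    obtain ⟨C₁, hC₁, hle₁⟩ := ih C hle
    obtain ⟨u, v, hadj, h2, rfl⟩ := hmove
    refine ⟨fun w => if w = u then C₁ u - 2 else if w = v then C₁ v + 1 else C₁ w,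
      hC₁.tail ⟨u, v, hadj, le_trans h2 (hle₁ u), rfl⟩, fun w => ?_⟩
    have hu := hle₁ u
    have hv := hle₁ v
    have hw := hle₁ w
    show (if w = u then _ else if w = v then _ else _) ≤ (if w = u then _ else if w = v then _ else _)
    split_ifs <;> omega


/-- For a `z₀`-unsolvable configuration `C` on `J₃`, the union
`A ∪ B = {x₀, x₁, x₋₁} ∪ {y₀, y₁, y₋₁}` carries at most 6 pebbles. -/
theorem J3_z0_unsolvable_AB (C : J3V → ℕ)
    (h : ¬ PebblingSolvable J3 C J3V.z0) :
    (∑ v ∈ (({J3V.x0, J3V.x1, J3V.xm} ∪ {J3V.y0, J3V.y1, J3V.ym}) : Finset J3V), C v) ≤ 6 := by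
  by_contra hc
  push_neg at hc
  have hsum : 7 ≤ C x0 + C x1 + C xm + C y0 + C y1 + C ym := by
    have heq : (∑ v ∈ (({J3V.x0, J3V.x1, J3V.xm} ∪ {J3V.y0, J3V.y1, J3V.ym}) : Finset J3V), C v)
        = C x0 + C x1 + C xm + C y0 + C y1 + C ym := by
      rw [show (({J3V.x0, J3V.x1, J3V.xm} ∪ {J3V.y0, J3V.y1, J3V.ym}) : Finset J3V)
        = {x0, x1, xm, y0, y1, ym} from by decide]
      simp [Finset.sum_insert, Finset.mem_insert, Finset.mem_singleton]
      ring
    omega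
  set a0 := min (C x0) 7 with ha0
  set a1 := min (C x1) (7 - a0) with ha1
  set am := min (C xm) (7 - a0 - a1) with ham
  set b0 := min (C y0) (7 - a0 - a1 - am) with hb0
  set b1 := min (C y1) (7 - a0 - a1 - am - b0) with hb1
  set bm := 7 - a0 - a1 - am - b0 - b1 with hbm
  have h7 : a0 + a1 + am + b0 + b1 + bm = 7 := by omega
  have hle : ∀ v, cfg (a0, a1, am, b0, b1, bm) v ≤ C v := by
    intro v; cases v <;> simp only [cfg] <;> omega
  exact h (solv_mono hle (seven a0 a1 am b0 b1 bm h7))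
end

section
/- Let C be an x_0-unsolvable configuration on the Flower snark J_3, and let E = {z_0, v_0, y_0} and F = {v_1, v_{−1}}. Then C(F) + 2·C(E) ≤ 10, where C(S) denotes the total number of pebbles on the vertices of S. -/
open J3V

lemma solvable_step {C C' : J3V → ℕ} (hm : PebblingMove J3 C C')
    (hs : PebblingSolvable J3 C' x0) : PebblingSolvable J3 C x0 := by
  obtain ⟨D, hD, h1⟩ := hs
  exact ⟨D, Relation.ReflTransGen.head hm hD, h1⟩

lemma solve_aux : ∀ (n : ℕ) (C : J3V → ℕ), C v1 + C vm + C y0 + C v0 ≤ n →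
    2 ≤ C z0 + C y0 / 2 + (C v0 + C v1 / 2 + C vm / 2) / 2 →
    PebblingSolvable J3 C x0 := by
  intro n
  induction n with
  | zero =>
    intro C hs hq
    have h2 : 2 ≤ C z0 := by omega
    exact ⟨_, Relation.ReflTransGen.single ⟨z0, x0, by simp [J3], h2, rfl⟩, by simp⟩
  | succ n ih =>
    intro C hs hq
    by_cases h1 : 2 ≤ C v1
    · exact solvable_step ⟨v1, v0, by simp [J3], h1, rfl⟩ (ih _ (by simp; omega) (by simp; omega))
    · by_cases h2 : 2 ≤ C vm
      · exact solvable_step ⟨vm, v0, by simp [J3], h2, rfl⟩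
          (ih _ (by simp; omega) (by simp; omega))
      · by_cases h3 : 2 ≤ C y0
        · exact solvable_step ⟨y0, z0, by simp [J3], h3, rfl⟩
            (ih _ (by simp; omega) (by simp; omega))
        · by_cases h4 : 2 ≤ C v0
          · exact solvable_step ⟨v0, z0, by simp [J3], h4, rfl⟩
              (ih _ (by simp; omega) (by simp; omega))
          · have h5 : 2 ≤ C z0 := by omega
            exact ⟨_, Relation.ReflTransGen.single ⟨z0, x0, by simp [J3], h5, rfl⟩, by simp⟩

/-- For an `x₀`-unsolvable configuration `C` on `J₃`, with
`E = {z₀, v₀, y₀}` and `F = {v₁, v₋₁}`, we have `C(F) + 2·C(E) ≤ 10`. -/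
theorem J3_x0_unsolvable_EF (C : J3V → ℕ)
    (h : ¬ PebblingSolvable J3 C J3V.x0) :
    (∑ v ∈ ({J3V.v1, J3V.vm} : Finset J3V), C v) +
      2 * (∑ v ∈ ({J3V.z0, J3V.v0, J3V.y0} : Finset J3V), C v) ≤ 10 := by
  by_contra h'
  apply h
  apply solve_aux (C v1 + C vm + C y0 + C v0) C le_rfl
  rw [Finset.sum_insert (by decide), Finset.sum_singleton,
    Finset.sum_insert (by decide), Finset.sum_insert (by decide), Finset.sum_singleton] at h'
  omega
end
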